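/- arXiv:2404.04576 — 4 statements merged into one kernel-verified Lean document; each statement's English description precedes it below -/
import Mathlib

section
/- Let E be a real p×n matrix with full column rank, and define à := E A (EᵀE)⁻¹ Eᵀ for A ∈ ℝ^{n×n}. If P̃ ∈ ℝ^{p×p} is symmetric and satisfies ÃᵀP̃ + P̃Ã + ρ(I - E(EᵀE)⁻¹Eᵀ) ≺ 0 for some ρ ∈ ℝ, then P := EᵀP̃E satisfies AᵀP + PA ≺ 0. -/
open Matrix

theorem stmt_8 (p n : ℕ) (E : Matrix (Fin p) (Fin n) ℝ)
    (hE : E.rank = n) (A : Matrix (Fin n) (Fin n) ℝ)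
    (Pt : Matrix (Fin p) (Fin p) ℝ) (hPt : Ptᵀ = Pt)
    (h : ∃ ρ : ℝ,
      (-((E * A * (Eᵀ * E)⁻¹ * Eᵀ)ᵀ * Pt + Pt * (E * A * (Eᵀ * E)⁻¹ * Eᵀ)
        + ρ • (1 - E * (Eᵀ * E)⁻¹ * Eᵀ))).PosDef) :
    (-(Aᵀ * (Eᵀ * Pt * E) + (Eᵀ * Pt * E) * A)).PosDef := by
  obtain ⟨ρ, hQ⟩ := h
  set G : Matrix (Fin n) (Fin n) ℝ := Eᵀ * E with hGdef
  set At : Matrix (Fin p) (Fin p) ℝ := E * A * G⁻¹ * Eᵀ with hAt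
  set Q : Matrix (Fin p) (Fin p) ℝ :=
    -(Atᵀ * Pt + Pt * At + ρ • (1 - E * G⁻¹ * Eᵀ)) with hQdef
  -- E has injective mulVec
  have hker : LinearMap.ker E.mulVecLin = ⊥ := by
    have h1 : Module.finrank ℝ (LinearMap.range E.mulVecLin)
        + Module.finrank ℝ (LinearMap.ker E.mulVecLin) = n := by
      rw [LinearMap.finrank_range_add_finrank_ker]; simp
    have h2 : Module.finrank ℝ (LinearMap.range E.mulVecLin) = n := hE
    have h3 : Module.finrank ℝ (LinearMap.ker E.mulVecLin) = 0 := by omega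
    exact Submodule.finrank_eq_zero.mp h3
  have hinj : ∀ x : Fin n → ℝ, E *ᵥ x = 0 → x = 0 := by
    intro x hx
    have : x ∈ LinearMap.ker E.mulVecLin := by simpa [Matrix.mulVecLin_apply] using hx
    simpa [hker] using this
  -- G = EᵀE is PosDef hence a unit
  have hGpd : G.PosDef := by
    refine Matrix.PosDef.of_dotProduct_mulVec_pos (by simpa [hGdef] using isHermitian_conjTranspose_mul_self E) fun x hx => ?_
    have hEx : E *ᵥ x ≠ 0 := fun hc => hx (hinj x hc)
    have hnn : (0:ℝ) ≤ (E *ᵥ x) ⬝ᵥ (E *ᵥ x) :=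
      Finset.sum_nonneg fun i _ => mul_self_nonneg _
    have hpos : (0:ℝ) < (E *ᵥ x) ⬝ᵥ (E *ᵥ x) := by
      rcases lt_or_eq_of_le hnn with hlt | heq
      · exact hlt
      · exact absurd ((dotProduct_self_eq_zero).mp heq.symm) hEx
    calc (0:ℝ) < (E *ᵥ x) ⬝ᵥ (E *ᵥ x) := hpos
      _ = star x ⬝ᵥ G *ᵥ x := by
          simp [hGdef, ← Matrix.mulVec_mulVec, Matrix.dotProduct_mulVec,
            Matrix.vecMul_transpose]
  have hdet : IsUnit G.det := (Matrix.isUnit_iff_isUnit_det G).mp hGpd.isUnit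
  have hGG : G * G⁻¹ = 1 := Matrix.mul_nonsing_inv G hdet
  have hGG' : G⁻¹ * G = 1 := Matrix.nonsing_inv_mul G hdet
  have hGt : G⁻¹ᵀ = G⁻¹ := by
    rw [Matrix.transpose_nonsing_inv]
    congr 1
    rw [hGdef, Matrix.transpose_mul, Matrix.transpose_transpose]
  -- key identity : Eᵀ * Q * E = -(Aᵀ P + P A)
  have key : Eᵀ * Q * E = -(Aᵀ * (Eᵀ * Pt * E) + (Eᵀ * Pt * E) * A) := by
    have hAtT : Atᵀ = E * G⁻¹ * Aᵀ * Eᵀ := by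
      rw [hAt]
      simp only [Matrix.transpose_mul, Matrix.transpose_transpose, hGt]
      simp [Matrix.mul_assoc]
    have e1 : Eᵀ * (Atᵀ * Pt) * E = Aᵀ * (Eᵀ * Pt * E) := by
      rw [hAtT]
      calc Eᵀ * (E * G⁻¹ * Aᵀ * Eᵀ * Pt) * E
          = (Eᵀ * E) * G⁻¹ * (Aᵀ * (Eᵀ * Pt * E)) := by simp only [Matrix.mul_assoc]
        _ = Aᵀ * (Eᵀ * Pt * E) := by rw [← hGdef, hGG, Matrix.one_mul]
    have e2 : Eᵀ * (Pt * At) * E = (Eᵀ * Pt * E) * A := by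
      rw [hAt]
      calc Eᵀ * (Pt * (E * A * G⁻¹ * Eᵀ)) * E
          = (Eᵀ * Pt * E) * A * (G⁻¹ * (Eᵀ * E)) := by simp only [Matrix.mul_assoc]
        _ = (Eᵀ * Pt * E) * A := by rw [← hGdef, hGG', Matrix.mul_one]
    have e3 : Eᵀ * (1 - E * G⁻¹ * Eᵀ) * E = 0 := by
      have : Eᵀ * (E * G⁻¹ * Eᵀ) * E = G := by
        calc Eᵀ * (E * G⁻¹ * Eᵀ) * E = (Eᵀ * E) * G⁻¹ * (Eᵀ * E) := by simp only [Matrix.mul_assoc]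
          _ = G := by rw [← hGdef, hGG, Matrix.one_mul]
      rw [Matrix.mul_sub, Matrix.sub_mul, Matrix.mul_one, this]
      rw [← hGdef]; simp
    rw [hQdef]
    rw [Matrix.mul_neg, Matrix.neg_mul]
    congr 1
    rw [Matrix.mul_add, Matrix.mul_add, Matrix.add_mul, Matrix.add_mul]
    rw [e1, e2]
    rw [Matrix.mul_smul, Matrix.smul_mul, e3]
    simp
  rw [← key]
  refine Matrix.PosDef.of_dotProduct_mulVec_pos ?_ fun x hx => ?_
  · have hQh := hQ.1
    have : Qᵀ = Q := by simpa [Matrix.IsHermitian] using hQh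
    simpa [Matrix.IsHermitian, Matrix.transpose_mul, Matrix.mul_assoc, this]
  · have hEx : E *ᵥ x ≠ 0 := fun hc => hx (hinj x hc)
    have := hQ.dotProduct_mulVec_pos hEx
    calc (0:ℝ) < star (E *ᵥ x) ⬝ᵥ Q *ᵥ (E *ᵥ x) := this
      _ = star x ⬝ᵥ (Eᵀ * Q * E) *ᵥ x := by
          simp [← Matrix.mulVec_mulVec, Matrix.dotProduct_mulVec,
            Matrix.vecMul_transpose]
end

section
/- Let E be a real p×n matrix with full column rank, A ∈ ℝ^{n×n}, and à := EA(EᵀE)⁻¹Eᵀ. If P ∈ ℝ^{n×n} is symmetric positive definite with AᵀP + PA ≺ 0 and P admits a factorization P = EᵀP̃E for some symmetric P̃ ∈ ℝ^{p×p}, then there exists ρ ∈ ℝ such that ÃᵀP̃ + P̃Ã + ρ(I - E(EᵀE)⁻¹Eᵀ) ≺ 0. -/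
open Matrix Module

section helpers

variable {m n : ℕ}

lemma dotT (A : Matrix (Fin m) (Fin n) ℝ) (x : Fin m → ℝ) (y : Fin n → ℝ) :
    y ⬝ᵥ (Aᵀ *ᵥ x) = (A *ᵥ y) ⬝ᵥ x := by
  rw [dotProduct_mulVec, vecMul_transpose]

lemma dps_pos {k : ℕ} {v : Fin k → ℝ} (hv : v ≠ 0) : 0 < v ⬝ᵥ v := by
  simpa using dotProduct_self_star_pos_iff.mpr hv

lemma dps_nonneg {k : ℕ} (v : Fin k → ℝ) : 0 ≤ v ⬝ᵥ v := by
  simpa using dotProduct_self_star_nonneg v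

end helpers

theorem stmt_9 (p n : ℕ) (E : Matrix (Fin p) (Fin n) ℝ)
    (hE : E.rank = n) (A : Matrix (Fin n) (Fin n) ℝ)
    (P : Matrix (Fin n) (Fin n) ℝ) (hP : P.PosDef)
    (hLyap : (-(Aᵀ * P + P * A)).PosDef)
    (Pt : Matrix (Fin p) (Fin p) ℝ) (hPt : Ptᵀ = Pt)
    (hfact : P = Eᵀ * Pt * E) :
    ∃ ρ : ℝ,
      (-((E * A * (Eᵀ * E)⁻¹ * Eᵀ)ᵀ * Pt + Pt * (E * A * (Eᵀ * E)⁻¹ * Eᵀ)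
        + ρ • (1 - E * (Eᵀ * E)⁻¹ * Eᵀ))).PosDef := by
  -- injectivity of E
  have hinj : ∀ z : Fin n → ℝ, E *ᵥ z = 0 → z = 0 := by
    have hrn := LinearMap.finrank_range_add_finrank_ker (E.mulVecLin)
    have hE' : finrank ℝ (LinearMap.range E.mulVecLin) = n := hE
    rw [hE', Module.finrank_fin_fun] at hrn
    have hker : LinearMap.ker E.mulVecLin = ⊥ := by
      rw [← Submodule.finrank_eq_zero (R := ℝ)]
      omega
    intro z hz
    have : z ∈ LinearMap.ker E.mulVecLin := by
      simpa [LinearMap.mem_ker, mulVecLin_apply] using hz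
    simpa [hker] using this
  set G : Matrix (Fin n) (Fin n) ℝ := Eᵀ * E with hGdef
  have hGsym : Gᵀ = G := by simp [hGdef, transpose_mul]
  have hG : G.PosDef := by
    refine posDef_iff_dotProduct_mulVec.mpr ⟨?_, ?_⟩
    · rw [IsHermitian, conjTranspose_eq_transpose_of_trivial, hGsym]
    · intro x hx
      have h1 : star x ⬝ᵥ G *ᵥ x = (E *ᵥ x) ⬝ᵥ (E *ᵥ x) := by
        simp only [star_trivial, hGdef, ← mulVec_mulVec, dotT]
      rw [h1]
      exact dps_pos fun h => hx (hinj x h)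
  have hGdet : IsUnit G.det := isUnit_iff_ne_zero.mpr hG.det_pos.ne'
  have hGG : G * G⁻¹ = 1 := mul_nonsing_inv _ hGdet
  have hG'G : G⁻¹ * G = 1 := nonsing_inv_mul _ hGdet
  have hGisym : (G⁻¹)ᵀ = G⁻¹ := by rw [transpose_nonsing_inv, hGsym]
  set N : Matrix (Fin n) (Fin n) ℝ := -(Aᵀ * P + P * A) with hNdef
  have hN : N.PosDef := hLyap
  have hNdet : IsUnit N.det := isUnit_iff_ne_zero.mpr hN.det_pos.ne'
  have hNN : N * N⁻¹ = 1 := mul_nonsing_inv _ hNdet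
  have hNsym : Nᵀ = N := by
    rw [← conjTranspose_eq_transpose_of_trivial]; exact hN.1
  have hNisym : (N⁻¹)ᵀ = N⁻¹ := by rw [transpose_nonsing_inv, hNsym]
  have hPsym : Pᵀ = P := by
    rw [← conjTranspose_eq_transpose_of_trivial]; exact hP.1
  set At : Matrix (Fin p) (Fin p) ℝ := E * A * G⁻¹ * Eᵀ with hAtdef
  set C : Matrix (Fin n) (Fin p) ℝ := Aᵀ * Eᵀ * Pt with hCdef
  set D : Matrix (Fin p) (Fin p) ℝ := Cᵀ * N⁻¹ * C with hDdef
  set K : ℝ := ∑ i, ∑ j, |D i j| with hKdef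
  have hK0 : 0 ≤ K := Finset.sum_nonneg fun i _ =>
    Finset.sum_nonneg fun j _ => abs_nonneg _
  refine ⟨-(2 * K + 1), posDef_iff_dotProduct_mulVec.mpr ⟨?_, ?_⟩⟩
  · -- Hermitian
    rw [IsHermitian, conjTranspose_eq_transpose_of_trivial]
    simp only [transpose_neg, transpose_add, transpose_smul, transpose_sub,
      transpose_one, transpose_mul, transpose_transpose, transpose_nonsing_inv,
      hGsym, hPt]
    rw [← Matrix.mul_assoc E G⁻¹ Eᵀ, add_comm (Pt * At) (Atᵀ * Pt)]
  · intro x hx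
    rw [star_trivial]
    set z : Fin n → ℝ := G⁻¹ *ᵥ (Eᵀ *ᵥ x) with hzdef
    set u : Fin p → ℝ := E *ᵥ z with hudef
    set v : Fin p → ℝ := x - u with hvdef
    have hxuv : x = u + v := by rw [hvdef]; ring
    have hEv : Eᵀ *ᵥ v = 0 := by
      have h1 : Eᵀ *ᵥ u = Eᵀ *ᵥ x := by
        rw [hudef, hzdef, mulVec_mulVec, ← hGdef, mulVec_mulVec, hGG, one_mulVec]
      rw [hvdef, mulVec_sub, h1, sub_self]
    have hAtv : At *ᵥ v = 0 := by
      rw [hAtdef, ← mulVec_mulVec, hEv, mulVec_zero]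
    have hAtu : At *ᵥ u = E *ᵥ (A *ᵥ z) := by
      have hAE : At * E = E * A := by
        rw [hAtdef, Matrix.mul_assoc (E * A * G⁻¹), ← hGdef, Matrix.mul_assoc (E * A), hG'G,
          Matrix.mul_one]
      rw [hudef, mulVec_mulVec, hAE, ← mulVec_mulVec]
    have hAtx : At *ᵥ x = E *ᵥ (A *ᵥ z) := by
      conv_lhs => rw [hxuv]
      rw [mulVec_add, hAtu, hAtv, add_zero]
    -- S-part
    have hS : x ⬝ᵥ ((Atᵀ * Pt + Pt * At) *ᵥ x)
        = 2 * ((E *ᵥ (A *ᵥ z)) ⬝ᵥ (Pt *ᵥ x)) := by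
      rw [add_mulVec, dotProduct_add, ← mulVec_mulVec, ← mulVec_mulVec, dotT, hAtx]
      have h2 : x ⬝ᵥ (Pt *ᵥ (E *ᵥ (A *ᵥ z)))
          = (E *ᵥ (A *ᵥ z)) ⬝ᵥ (Pt *ᵥ x) := by
        conv_lhs => rw [← hPt]
        rw [dotT, dotProduct_comm]
      rw [h2]; ring
    have hPtx : (E *ᵥ (A *ᵥ z)) ⬝ᵥ (Pt *ᵥ x)
        = (A *ᵥ z) ⬝ᵥ (P *ᵥ z) + z ⬝ᵥ (C *ᵥ v) := by
      have hEPtE : ∀ w : Fin n → ℝ, Eᵀ *ᵥ (Pt *ᵥ (E *ᵥ w)) = P *ᵥ w := by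
        intro w
        rw [mulVec_mulVec, mulVec_mulVec, ← hfact]
      conv_lhs => rw [hxuv]
      rw [mulVec_add, dotProduct_add]
      congr 1
      · rw [hudef, ← dotT E, hEPtE]
      · rw [hCdef, ← mulVec_mulVec, ← mulVec_mulVec, dotT A, ← dotT E]
    have hNz : z ⬝ᵥ (N *ᵥ z) = -(2 * ((A *ᵥ z) ⬝ᵥ (P *ᵥ z))) := by
      rw [hNdef, neg_mulVec, dotProduct_neg, add_mulVec, dotProduct_add,
        ← mulVec_mulVec, ← mulVec_mulVec, dotT]
      have h3 : z ⬝ᵥ (P *ᵥ (A *ᵥ z)) = (A *ᵥ z) ⬝ᵥ (P *ᵥ z) := by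
        conv_lhs => rw [← hPsym]
        rw [dotT, dotProduct_comm]
      rw [h3]; ring
    -- M-part
    have hMx : x ⬝ᵥ ((1 - E * G⁻¹ * Eᵀ) *ᵥ x) = v ⬝ᵥ v := by
      have hPix : (E * G⁻¹ * Eᵀ) *ᵥ x = u := by
        rw [← mulVec_mulVec, ← mulVec_mulVec, hudef, hzdef]
      rw [sub_mulVec, one_mulVec, hPix, ← hvdef]
      conv_lhs => rw [hxuv]
      rw [add_dotProduct]
      have h4 : u ⬝ᵥ v = 0 := by
        rw [hudef, ← dotT, hEv, dotProduct_zero]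
      rw [h4, zero_add]
    -- completion of square
    set y : Fin n → ℝ := N⁻¹ *ᵥ (C *ᵥ v) with hydef
    have hNy : N *ᵥ y = C *ᵥ v := by
      rw [hydef, mulVec_mulVec, hNN, one_mulVec]
    have hyNz : y ⬝ᵥ (N *ᵥ z) = z ⬝ᵥ (C *ᵥ v) := by
      conv_lhs => rw [← hNsym]
      rw [dotT, hNy, dotProduct_comm]
    have hyCv : y ⬝ᵥ (C *ᵥ v) = v ⬝ᵥ (D *ᵥ v) := by
      have h5 : D *ᵥ v = Cᵀ *ᵥ y := by
        rw [hDdef, ← mulVec_mulVec, ← mulVec_mulVec, hydef]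
      rw [h5, dotT, dotProduct_comm]
    have hsq : 0 ≤ z ⬝ᵥ (N *ᵥ z) - 4 * (z ⬝ᵥ (C *ᵥ v)) + 4 * (v ⬝ᵥ (D *ᵥ v)) := by
      have hw := hN.posSemidef.dotProduct_mulVec_nonneg (z - (2:ℝ) • y)
      rw [star_trivial] at hw
      have hexp : (z - (2:ℝ) • y) ⬝ᵥ (N *ᵥ (z - (2:ℝ) • y))
          = z ⬝ᵥ (N *ᵥ z) - 4 * (z ⬝ᵥ (C *ᵥ v)) + 4 * (v ⬝ᵥ (D *ᵥ v)) := by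
        simp only [mulVec_sub, mulVec_smul, hNy, sub_dotProduct, dotProduct_sub,
          smul_dotProduct, dotProduct_smul, smul_eq_mul, hyNz, hyCv]
        ring
      linarith [hexp ▸ hw]
    -- bound on D quadratic form
    have hvk : ∀ i, v i * v i ≤ v ⬝ᵥ v := fun i =>
      Finset.single_le_sum (f := fun k => v k * v k)
        (fun k _ => mul_self_nonneg (v k)) (Finset.mem_univ i)
    have hbound : v ⬝ᵥ (D *ᵥ v) ≤ K * (v ⬝ᵥ v) := by
      calc v ⬝ᵥ (D *ᵥ v) = ∑ i, ∑ j, v i * (D i j * v j) := by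
            simp [dotProduct, mulVec, Finset.mul_sum]
        _ ≤ ∑ i, ∑ j, |D i j| * (v ⬝ᵥ v) := by
            refine Finset.sum_le_sum fun i _ => Finset.sum_le_sum fun j _ => ?_
            have h1 := hvk i
            have h2 := hvk j
            have h3 := le_abs_self (D i j)
            have h4 := neg_abs_le (D i j)
            nlinarith [sq_nonneg (v i - v j), sq_nonneg (v i + v j), abs_nonneg (D i j)]
        _ = K * (v ⬝ᵥ v) := by rw [hKdef]; simp [Finset.sum_mul]
    -- put everything together
    have hfin : x ⬝ᵥ ((-(Atᵀ * Pt + Pt * At + (-(2 * K + 1)) • (1 - E * G⁻¹ * Eᵀ))) *ᵥ x)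
        = z ⬝ᵥ (N *ᵥ z) - 2 * (z ⬝ᵥ (C *ᵥ v)) + (2 * K + 1) * (v ⬝ᵥ v) := by
      rw [neg_mulVec, dotProduct_neg, add_mulVec, dotProduct_add, smul_mulVec,
        dotProduct_smul, smul_eq_mul, hS, hPtx, hMx, hNz]
      ring
    rw [hfin]
    have ha1 : 0 ≤ z ⬝ᵥ (N *ᵥ z) := by
      have := hN.posSemidef.dotProduct_mulVec_nonneg z
      rwa [star_trivial] at this
    by_cases hv : v = 0
    · have hz : z ≠ 0 := by
        intro h
        apply hx
        rw [hxuv, hudef, h, mulVec_zero, hv, add_zero]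
      have ha1' : 0 < z ⬝ᵥ (N *ᵥ z) := by
        have := hN.dotProduct_mulVec_pos hz
        rwa [star_trivial] at this
      have hb : v ⬝ᵥ v = 0 := by rw [hv]; simp
      have hcv : C *ᵥ v = 0 := by rw [hv, mulVec_zero]
      rw [hb, hcv, dotProduct_zero]
      linarith
    · have hb : 0 < v ⬝ᵥ v := dps_pos hv
      nlinarith [hsq, hbound, ha1, hb]
end

section
/- Let E ∈ ℝ^{p×n} have full column rank, A, B ∈ ℝ^{n×n}, and define à := EA(EᵀE)⁻¹Eᵀ, B̃ := EB(EᵀE)⁻¹Eᵀ, M := I - E(EᵀE)⁻¹Eᵀ. Suppose there exist a symmetric positive definite Q̃ ∈ ℝ^{p×p}, Z̃ ∈ ℝ^{p×p}, and ρ ∈ ℝ such that Q̃Ãᵀ + ÃQ̃ + Z̃ᵀB̃ᵀ + B̃Z̃ + ρ Q̃MQ̃ ≺ 0. Then K := (EᵀE)⁻¹Eᵀ(Z̃Q̃⁻¹)E and P := EᵀQ̃⁻¹E satisfy P ≻ 0 and (A+BK)ᵀP + P(A+BK) ≺ 0. -/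
open Matrix

/-- Conjugation of a positive definite matrix by an injective map. -/
lemma posDef_conj {p n : ℕ} {N : Matrix (Fin p) (Fin p) ℝ}
    (hN : N.PosDef) {W : Matrix (Fin p) (Fin n) ℝ}
    (hW : Function.Injective W.mulVec) : (Wᵀ * N * W).PosDef := by
  refine Matrix.posDef_iff_dotProduct_mulVec.mpr ⟨?_, ?_⟩
  · have hNh : Nᵀ = N := by
      simpa [Matrix.IsHermitian, Matrix.conjTranspose_eq_transpose_of_trivial]
        using hN.isHermitian
    show (Wᵀ * N * W)ᴴ = _
    rw [Matrix.conjTranspose_eq_transpose_of_trivial, Matrix.transpose_mul,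
      Matrix.transpose_mul, Matrix.transpose_transpose, hNh, Matrix.mul_assoc]
  · intro x hx
    have hWx : W.mulVec x ≠ 0 := by
      intro h
      exact hx (hW (by simpa using h))
    have := hN.dotProduct_mulVec_pos hWx
    simpa [Matrix.dotProduct_mulVec, star_trivial, ← Matrix.mulVec_mulVec,
      Matrix.vecMul_transpose, Matrix.mul_assoc] using this
  
lemma mulVec_inj_of_rank {p n : ℕ} {E : Matrix (Fin p) (Fin n) ℝ}
    (hE : E.rank = n) : Function.Injective E.mulVec := by
  have h := LinearMap.finrank_range_add_finrank_ker E.mulVecLin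
  rw [show (Module.finrank ℝ (LinearMap.range E.mulVecLin)) = E.rank from rfl, hE] at h
  simp only [Module.finrank_fintype_fun_eq_card, Fintype.card_fin] at h
  have hker : LinearMap.ker E.mulVecLin = ⊥ :=
    Submodule.finrank_eq_zero.mp (by omega)
  have := LinearMap.ker_eq_bot.mp hker
  intro x y hxy
  exact this (by simpa [Matrix.mulVecLin_apply] using hxy)

theorem stmt_16 (p n : ℕ) (E : Matrix (Fin p) (Fin n) ℝ)
    (hE : E.rank = n) (A B : Matrix (Fin n) (Fin n) ℝ)
    (Qt Zt : Matrix (Fin p) (Fin p) ℝ) (hQt : Qt.PosDef) (ρ : ℝ)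
    (hLMI :
      letI At : Matrix (Fin p) (Fin p) ℝ := E * A * (Eᵀ * E)⁻¹ * Eᵀ
      letI Bt : Matrix (Fin p) (Fin p) ℝ := E * B * (Eᵀ * E)⁻¹ * Eᵀ
      letI M : Matrix (Fin p) (Fin p) ℝ := 1 - E * (Eᵀ * E)⁻¹ * Eᵀ
      (-(Qt * Atᵀ + At * Qt + Ztᵀ * Btᵀ + Bt * Zt + ρ • (Qt * M * Qt))).PosDef) :
    letI K : Matrix (Fin n) (Fin n) ℝ := (Eᵀ * E)⁻¹ * Eᵀ * (Zt * Qt⁻¹) * E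
    letI P : Matrix (Fin n) (Fin n) ℝ := Eᵀ * Qt⁻¹ * E
    P.PosDef ∧ (-((A + B * K)ᵀ * P + P * (A + B * K))).PosDef := by
  set K : Matrix (Fin n) (Fin n) ℝ := (Eᵀ * E)⁻¹ * Eᵀ * (Zt * Qt⁻¹) * E with hK
  set P : Matrix (Fin n) (Fin n) ℝ := Eᵀ * Qt⁻¹ * E with hP
  -- basic invertibility facts
  have hEinj : Function.Injective E.mulVec := mulVec_inj_of_rank hE
  have hQinv : Qt⁻¹.PosDef := hQt.inv
  have hQdet : IsUnit Qt.det := hQt.det_pos.ne'.isUnit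
  have hQu : IsUnit Qt := (Matrix.isUnit_iff_isUnit_det Qt).mpr hQdet
  have hq : Qt⁻¹ * Qt = 1 := Matrix.nonsing_inv_mul Qt hQdet
  have hq' : Qt * Qt⁻¹ = 1 := Matrix.mul_nonsing_inv Qt hQdet
  have hEtE : (Eᵀ * E).rank = n := by rw [Matrix.rank_transpose_mul_self, hE]
  have hEtEu : IsUnit (Eᵀ * E) := by
    have : Function.Injective (Eᵀ * E).mulVec := by
      intro x y hxy
      apply mulVec_inj_of_rank hEtE hxy
    exact Matrix.mulVec_injective_iff_isUnit.mp this
  have he : (Eᵀ * E)⁻¹ * (Eᵀ * E) = 1 :=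
    Matrix.nonsing_inv_mul _ ((Matrix.isUnit_iff_isUnit_det _).mp hEtEu)
  -- cancellation helpers
  have hc1 : ∀ X : Matrix (Fin n) (Fin p) ℝ, (Eᵀ * E)⁻¹ * (Eᵀ * (E * X)) = X := by
    intro X
    rw [← Matrix.mul_assoc Eᵀ E X, ← Matrix.mul_assoc, he, Matrix.one_mul]
  have he' : (Eᵀ * E) * (Eᵀ * E)⁻¹ = 1 :=
    Matrix.mul_nonsing_inv _ ((Matrix.isUnit_iff_isUnit_det _).mp hEtEu)
  have hc4 : ∀ X : Matrix (Fin n) (Fin n) ℝ, Eᵀ * (E * ((Eᵀ * E)⁻¹ * X)) = X := by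
    intro X
    rw [← Matrix.mul_assoc Eᵀ E _, ← Matrix.mul_assoc, he', Matrix.one_mul]
  have hc2 : ∀ X : Matrix (Fin p) (Fin n) ℝ, Qt⁻¹ * (Qt * X) = X := by
    intro X; rw [← Matrix.mul_assoc, hq, Matrix.one_mul]
  have hc3 : ∀ X : Matrix (Fin p) (Fin n) ℝ, Qt * (Qt⁻¹ * X) = X := by
    intro X; rw [← Matrix.mul_assoc, hq', Matrix.one_mul]
  have hqsym : Qt⁻¹ᵀ = Qt⁻¹ := by
    have h1 : Qtᵀ = Qt := by
      simpa [Matrix.IsHermitian, Matrix.conjTranspose_eq_transpose_of_trivial]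
        using hQt.isHermitian
    rw [Matrix.transpose_nonsing_inv, h1]
  -- symmetry of (EᵀE)⁻¹
  have hesym : ((Eᵀ * E)⁻¹)ᵀ = (Eᵀ * E)⁻¹ := by
    rw [Matrix.transpose_nonsing_inv, Matrix.transpose_mul, Matrix.transpose_transpose]
  -- set W := Qt⁻¹ * E
  set W : Matrix (Fin p) (Fin n) ℝ := Qt⁻¹ * E with hW
  have hWinj : Function.Injective W.mulVec := by
    intro x y hxy
    have h2 : Qt⁻¹ *ᵥ (E *ᵥ x) = Qt⁻¹ *ᵥ (E *ᵥ y) := by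
      simpa [hW, ← Matrix.mulVec_mulVec] using hxy
    have hinv : Function.Injective Qt⁻¹.mulVec :=
      Matrix.mulVec_injective_iff_isUnit.mpr
        ((Matrix.isUnit_iff_isUnit_det Qt⁻¹).mpr hQinv.det_pos.ne'.isUnit)
    exact hEinj (hinv h2)
  constructor
  · -- P = Wᵀ * Qt * W  (since Eᵀ Qt⁻¹ E = (Qt⁻¹E)ᵀ Qt (Qt⁻¹ E))
    have hPeq : P = Wᵀ * Qt * W := by
      show Eᵀ * Qt⁻¹ * E = _
      rw [hW, Matrix.transpose_mul, hqsym, Matrix.mul_assoc (Eᵀ * Qt⁻¹) Qt (Qt⁻¹ * E),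
        hc3, Matrix.mul_assoc]
    rw [hPeq]
    exact posDef_conj hQt hWinj
  · -- the main algebraic identity
    set At : Matrix (Fin p) (Fin p) ℝ := E * A * (Eᵀ * E)⁻¹ * Eᵀ with hAt
    set Bt : Matrix (Fin p) (Fin p) ℝ := E * B * (Eᵀ * E)⁻¹ * Eᵀ with hBt
    set M : Matrix (Fin p) (Fin p) ℝ := 1 - E * (Eᵀ * E)⁻¹ * Eᵀ with hM
    set S : Matrix (Fin p) (Fin p) ℝ :=
      -(Qt * Atᵀ + At * Qt + Ztᵀ * Btᵀ + Bt * Zt + ρ • (Qt * M * Qt)) with hS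
    have hSpd : S.PosDef := hLMI
    have key : (A + B * K)ᵀ * P + P * (A + B * K) =
        Wᵀ * (Qt * Atᵀ + At * Qt + Ztᵀ * Btᵀ + Bt * Zt + ρ • (Qt * M * Qt)) * W := by
      show (A + B * K)ᵀ * (Eᵀ * Qt⁻¹ * E) + (Eᵀ * Qt⁻¹ * E) * (A + B * K) = _
      simp only [hK, hW, hAt, hBt, hM, hS, Matrix.transpose_add, Matrix.transpose_mul,
        Matrix.transpose_transpose, hqsym, hesym, Matrix.add_mul, Matrix.mul_add,
        Matrix.sub_mul, Matrix.mul_sub, Matrix.smul_mul, Matrix.mul_smul,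
        Matrix.one_mul, Matrix.mul_one]
      simp only [Matrix.mul_assoc, hc1, hc2, hc3, hc4, he, Matrix.mul_one,
        sub_self, smul_zero, add_zero]
      abel
    have goal_eq : -((A + B * K)ᵀ * P + P * (A + B * K)) = Wᵀ * S * W := by
      rw [key, hS, Matrix.mul_neg, Matrix.neg_mul]
    rw [goal_eq]
    exact posDef_conj hSpd hWinj
end

section
/- Let E ∈ ℝ^{p×n} have full column rank and let M := I - E(EᵀE)⁻¹Eᵀ. Suppose Q̃ ∈ ℝ^{p×p} is symmetric positive definite, Φ ∈ ℝ^{p×p} is symmetric, and there exist ρ ∈ ℝ and η > 0 such that Φ + ρM ≺ 0 and Q̃M + MQ̃ ⪰ ηM. Then Φ ≺ (|ρ|/η)(Q̃M + MQ̃), and consequently EᵀQ̃⁻¹ΦQ̃⁻¹E ≺ 0. -/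
open Matrix

theorem stmt_17 (p n : ℕ) (E : Matrix (Fin p) (Fin n) ℝ)
    (hE : E.rank = n)
    (Qt : Matrix (Fin p) (Fin p) ℝ) (hQt : Qt.PosDef)
    (Phi : Matrix (Fin p) (Fin p) ℝ) (hPhi : Phiᵀ = Phi)
    (ρ η : ℝ) (hη : 0 < η)
    (M : Matrix (Fin p) (Fin p) ℝ) (hM : M = 1 - E * (Eᵀ * E)⁻¹ * Eᵀ)
    (h1 : (-(Phi + ρ • M)).PosDef)
    (h2 : (Qt * M + M * Qt - η • M).PosSemidef) :
    ((|ρ| / η) • (Qt * M + M * Qt) - Phi).PosDef ∧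
    (-(Eᵀ * Qt⁻¹ * Phi * Qt⁻¹ * E)).PosDef := by
  have hηne : η ≠ 0 := hη.ne'
  set G := Eᵀ * E with hG
  -- G is invertible
  have hGrank : G.rank = n := by rw [hG, E.rank_transpose_mul_self, hE]
  have hGunit : IsUnit G := by
    rw [← Matrix.mulVec_surjective_iff_isUnit]
    have hrange : LinearMap.range G.mulVecLin = ⊤ := by
      apply Submodule.eq_top_of_finrank_eq
      rw [← Matrix.rank, hGrank, Module.finrank_fintype_fun_eq_card, Fintype.card_fin]
    intro y
    obtain ⟨x, hx⟩ := LinearMap.range_eq_top.mp hrange y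
    exact ⟨x, by simpa using hx⟩
  have hGdet : IsUnit G.det := (Matrix.isUnit_iff_isUnit_det G).mp hGunit
  have hGinv : G⁻¹ * G = 1 := Matrix.nonsing_inv_mul G hGdet
  have hGT : Gᵀ = G := by rw [hG, transpose_mul, transpose_transpose]
  -- M kills E
  have hME : M * E = 0 := by
    rw [hM, Matrix.sub_mul, Matrix.one_mul, Matrix.mul_assoc (E * G⁻¹) Eᵀ E, ← hG,
      Matrix.mul_assoc, hGinv, Matrix.mul_one, sub_self]
  have hMT : Mᵀ = M := by
    rw [hM]
    simp [transpose_sub, transpose_mul, transpose_transpose, Matrix.transpose_nonsing_inv,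
      hGT, Matrix.mul_assoc]
  have hMM : M * M = M := by
    nth_rewrite 2 [hM]
    simp [Matrix.mul_sub, Matrix.mul_one, ← Matrix.mul_assoc, hME]
  -- quadratic form facts
  have hMpos : ∀ x : Fin p → ℝ, 0 ≤ x ⬝ᵥ M *ᵥ x := by
    intro x
    have : x ⬝ᵥ M *ᵥ x = (M *ᵥ x) ⬝ᵥ (M *ᵥ x) := by
      conv_lhs => rw [← hMM, ← Matrix.mulVec_mulVec, Matrix.dotProduct_mulVec]
      rw [← hMT, Matrix.vecMul_transpose, hMT]
    rw [this]
    exact Finset.sum_nonneg fun i _ => mul_self_nonneg _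
  have h1x : ∀ x : Fin p → ℝ, x ≠ 0 → x ⬝ᵥ Phi *ᵥ x + ρ * (x ⬝ᵥ M *ᵥ x) < 0 := by
    intro x hx
    have := h1.dotProduct_mulVec_pos hx
    simp only [Matrix.neg_mulVec, Matrix.add_mulVec, Matrix.smul_mulVec,
      dotProduct_neg, dotProduct_add, dotProduct_smul, smul_eq_mul, star_trivial] at this
    linarith
  have h2x : ∀ x : Fin p → ℝ, η * (x ⬝ᵥ M *ᵥ x) ≤ x ⬝ᵥ (Qt * M + M * Qt) *ᵥ x := by
    intro x
    have := h2.dotProduct_mulVec_nonneg x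
    simp only [Matrix.sub_mulVec, Matrix.smul_mulVec, dotProduct_sub,
      dotProduct_smul, smul_eq_mul, star_trivial] at this
    linarith
  -- the key strict inequality
  have hlt : ∀ x : Fin p → ℝ, x ≠ 0 →
      x ⬝ᵥ Phi *ᵥ x < (|ρ| / η) * (x ⬝ᵥ (Qt * M + M * Qt) *ᵥ x) := by
    intro x hx
    have hs := hMpos x
    have hd0 : 0 ≤ |ρ| / η := div_nonneg (abs_nonneg ρ) hη.le
    have hdη : |ρ| / η * η = |ρ| := div_mul_cancel₀ _ hηne
    nlinarith [h1x x hx, mul_le_mul_of_nonneg_left (h2x x) hd0,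
      mul_le_mul_of_nonneg_right (neg_le_abs ρ) hs]
  have hQtT : Qtᵀ = Qt := by
    have := hQt.1
    rwa [Matrix.IsHermitian, conjTranspose_eq_transpose_of_trivial] at this
  -- first part
  have part1 : ((|ρ| / η) • (Qt * M + M * Qt) - Phi).PosDef := by
    refine posDef_iff_dotProduct_mulVec.mpr ⟨?_, ?_⟩
    · rw [Matrix.IsHermitian, conjTranspose_eq_transpose_of_trivial]
      simp [transpose_sub, transpose_smul, transpose_add, transpose_mul, hMT, hQtT, hPhi,
        add_comm]
    · intro x hx
      have := hlt x hx
      simp only [Matrix.sub_mulVec, Matrix.smul_mulVec, dotProduct_sub,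
        dotProduct_smul, smul_eq_mul, star_trivial]
      linarith
  refine ⟨part1, ?_⟩
  -- second part
  have hEinj : ∀ x : Fin n → ℝ, E *ᵥ x = 0 → x = 0 := by
    intro x hx
    have hGx : G *ᵥ x = 0 := by rw [hG, ← Matrix.mulVec_mulVec, hx, Matrix.mulVec_zero]
    calc x = (G⁻¹ * G) *ᵥ x := by rw [hGinv, Matrix.one_mulVec]
    _ = G⁻¹ *ᵥ (G *ᵥ x) := by rw [Matrix.mulVec_mulVec]
    _ = 0 := by rw [hGx, Matrix.mulVec_zero]
  have hQdet : IsUnit Qt.det := hQt.det_pos.ne'.isUnit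
  have hQQi : Qt * Qt⁻¹ = 1 := Matrix.mul_nonsing_inv Qt hQdet
  have hQiT : Qt⁻¹ᵀ = Qt⁻¹ := by rw [Matrix.transpose_nonsing_inv, hQtT]
  refine posDef_iff_dotProduct_mulVec.mpr ⟨?_, ?_⟩
  · rw [Matrix.IsHermitian, conjTranspose_eq_transpose_of_trivial]
    simp [transpose_neg, transpose_mul, transpose_transpose, hQiT, hPhi, Matrix.mul_assoc]
  · intro x hx
    set y := Qt⁻¹ *ᵥ (E *ᵥ x) with hy
    have hQy : Qt *ᵥ y = E *ᵥ x := by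
      rw [hy, Matrix.mulVec_mulVec, hQQi, Matrix.one_mulVec]
    have hExne : E *ᵥ x ≠ 0 := fun hE0 => hx (hEinj x hE0)
    have hyne : y ≠ 0 := by
      intro h0
      apply hExne
      rw [← hQy, h0, Matrix.mulVec_zero]
    have hMEx : M *ᵥ (E *ᵥ x) = 0 := by
      rw [Matrix.mulVec_mulVec, hME, Matrix.zero_mulVec]
    have ht0 : y ⬝ᵥ (Qt * M + M * Qt) *ᵥ y = 0 := by
      have t1 : y ⬝ᵥ (Qt * M) *ᵥ y = 0 := by
        rw [← Matrix.mulVec_mulVec, Matrix.dotProduct_mulVec, ← hQtT,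
          Matrix.vecMul_transpose, hQy, Matrix.dotProduct_mulVec, ← hMT,
          Matrix.vecMul_transpose, hMEx, zero_dotProduct]
      have t2 : y ⬝ᵥ (M * Qt) *ᵥ y = 0 := by
        rw [← Matrix.mulVec_mulVec, hQy, hMEx, dotProduct_zero]
      rw [Matrix.add_mulVec, dotProduct_add, t1, t2, add_zero]
    have hform : x ⬝ᵥ (Eᵀ * Qt⁻¹ * Phi * Qt⁻¹ * E) *ᵥ x = y ⬝ᵥ Phi *ᵥ y := by
      rw [← Matrix.mulVec_mulVec, ← Matrix.mulVec_mulVec, ← Matrix.mulVec_mulVec,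
        ← Matrix.mulVec_mulVec, ← hy, Matrix.dotProduct_mulVec, Matrix.vecMul_transpose,
        Matrix.dotProduct_mulVec, ← hQiT, Matrix.vecMul_transpose, ← hy]
    have := hlt y hyne
    rw [ht0, mul_zero] at this
    simp only [Matrix.neg_mulVec, dotProduct_neg, star_trivial, hform]
    linarith
end
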